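/- Let λ be a partition and let (a,b) and (i,j) be boxes of λ such that (i−2,j) and (i,j+2) are also boxes of λ, a ≤ i, b ≥ j, and (i−a) + (b−j) ≥ 2. If wt((i−2,j),(a,b)) = 0 and wt((i,j+2),(a,b)) = 0, then wt((i,j),(a,b)) = 0. -/

import Mathlib

/-- `(i,j)` is a box of the Young diagram of `lam` (parts `lam 1, lam 2, …`, rows indexed
from the top, columns from the left): `1 ≤ i`, `1 ≤ j ≤ lam i`. -/
def inDiagram (lam : ℕ → ℕ) (p : ℕ × ℕ) : Prop :=
  1 ≤ p.1 ∧ 1 ≤ p.2 ∧ p.2 ≤ lam p.1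

/-- A step of a lattice path: up `(i,j) → (i-1,j)` or right `(i,j) → (i,j+1)`. -/
def isStep (p q : ℕ × ℕ) : Prop :=
  (p.1 = q.1 + 1 ∧ p.2 = q.2) ∨ (q.1 = p.1 ∧ q.2 = p.2 + 1)

/-- `P` is a lattice path in `lam` from box `a` to box `b`: a nonempty sequence of boxes of
`lam` starting at `a`, ending at `b`, each step going up or right. -/
def IsLatticePath (lam : ℕ → ℕ) (a b : ℕ × ℕ) (P : List (ℕ × ℕ)) : Prop :=
  P ≠ [] ∧ P.head? = some a ∧ P.getLast? = some b ∧
    (∀ q ∈ P, inDiagram lam q) ∧ List.Chain' isStep P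

/-- The signed weight of a path: the product of `(-1)^{i-1}` over all right steps taken from a
box in row `i` (up steps contribute `1`). -/
def pathWeight : List (ℕ × ℕ) → ℤ
  | [] => 1
  | [_] => 1
  | p :: q :: rest =>
      (if q.1 = p.1 then (-1 : ℤ) ^ (p.1 - 1) else 1) * pathWeight (q :: rest)

/-- `wt(a,b)`: the sum of the signed weights of all lattice paths in `lam` from `a` to `b`. -/
noncomputable def wtSum (lam : ℕ → ℕ) (a b : ℕ × ℕ) : ℤ :=
  ∑ᶠ P ∈ {P : List (ℕ × ℕ) | IsLatticePath lam a b P}, pathWeight P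

/-- The double staircase partition `ρ̃_n`: `(n,n,n-2,n-2,…,2,2)` for even `n` and
`(n,n,n-2,n-2,…,3,3,2)` for odd `n`, as a function sending a row index to its part. -/
def rhoTilde (n i : ℕ) : ℕ :=
  if 1 ≤ i ∧ i ≤ n then (if n % 2 = 1 ∧ i = n then 2 else n - 2 * ((i - 1) / 2)) else 0

section aux

lemma head_le : ∀ (P : List (ℕ × ℕ)), P.Chain' isStep → ∀ p, P.head? = some p →
    ∀ x ∈ P, x.1 ≤ p.1 ∧ p.2 ≤ x.2 := by
  intro P
  induction P with
  | nil => intro _ p hp; simp at hp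
  | cons y t ih =>
    intro hc p hp x hx
    simp at hp; subst hp
    rcases List.mem_cons.mp hx with rfl | hx'
    · omega
    · cases t with
      | nil => simp at hx'
      | cons z t' =>
        have h1 := (List.isChain_cons_cons.mp hc).1
        have h2 := ih hc.tail z rfl x hx'
        rcases h1 with ⟨a1, a2⟩ | ⟨a1, a2⟩ <;> omega

lemma le_last : ∀ (P : List (ℕ × ℕ)), P.Chain' isStep → ∀ q, P.getLast? = some q →
    ∀ x ∈ P, q.1 ≤ x.1 ∧ x.2 ≤ q.2 := by
  intro P
  induction P with
  | nil => intro _ q hq; simp at hq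
  | cons y t ih =>
    intro hc q hq x hx
    cases t with
    | nil =>
      simp at hq hx
      subst hq; subst hx; omega
    | cons z t' =>
      rw [List.getLast?_cons_cons] at hq
      have hzq := ih hc.tail q hq
      rcases List.mem_cons.mp hx with rfl | hx'
      · have h1 := (List.isChain_cons_cons.mp hc).1
        have h2 := hzq z (List.mem_cons_self (a := z) (l := t'))
        rcases h1 with ⟨a1, a2⟩ | ⟨a1, a2⟩ <;> omega
      · exact hzq x hx'

lemma path_nodup : ∀ (P : List (ℕ × ℕ)), P.Chain' isStep → P.Nodup := by
  intro P
  induction P with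
  | nil => simp
  | cons y t ih =>
    intro hc
    rw [List.nodup_cons]
    refine ⟨?_, ih hc.tail⟩
    intro hmem
    cases t with
    | nil => simp at hmem
    | cons z t' =>
      have h2 := head_le (z :: t') hc.tail z rfl y hmem
      have h1 := (List.isChain_cons_cons.mp hc).1
      rcases h1 with ⟨a1, a2⟩ | ⟨a1, a2⟩ <;> omega

lemma bounded_lists_finite (S : Set (ℕ × ℕ)) (hS : S.Finite) (n : ℕ) :
    {l : List (ℕ × ℕ) | l.length ≤ n ∧ ∀ x ∈ l, x ∈ S}.Finite := by
  haveI := hS.to_subtype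
  have hsub : {l : List (ℕ × ℕ) | l.length ≤ n ∧ ∀ x ∈ l, x ∈ S} ⊆
      (fun l : List S => l.map Subtype.val) '' {l | l.length ≤ n} := by
    rintro l ⟨hlen, hmem⟩
    refine ⟨l.attach.map (fun x => ⟨x.1, hmem x.1 x.2⟩), by simpa using hlen, ?_⟩
    show List.map Subtype.val (l.attach.map fun x => (⟨x.1, hmem x.1 x.2⟩ : S)) = l
    rw [List.map_map]
    rw [show (Subtype.val ∘ fun x : {x // x ∈ l} => (⟨x.1, hmem x.1 x.2⟩ : S)) = fun x => x.1
      from rfl]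
    exact List.attach_map_subtype_val l
  exact ((List.finite_length_le (↥S) n).image _).subset hsub

lemma paths_finite (lam : ℕ → ℕ) (p q : ℕ × ℕ) :
    {P | IsLatticePath lam p q P}.Finite := by
  have hbox : ({x : ℕ × ℕ | x.1 ≤ p.1 ∧ x.2 ≤ q.2}).Finite := by
    apply Set.Finite.subset (Finset.range (p.1 + 1) ×ˢ Finset.range (q.2 + 1)).finite_toSet
    intro x hx
    simp only [Set.mem_setOf_eq] at hx
    simp only [Finset.coe_product, Set.mem_prod, Finset.mem_coe, Finset.mem_range]
    omega
  apply (bounded_lists_finite _ hbox ((p.1 + 1) * (q.2 + 1))).subset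
  rintro P ⟨hne, hh, hl, hmem, hc⟩
  have hnodup := path_nodup P hc
  have hbound : ∀ x ∈ P, x.1 ≤ p.1 ∧ x.2 ≤ q.2 := by
    intro x hx
    exact ⟨(head_le P hc p hh x hx).1, (le_last P hc q hl x hx).2⟩
  refine ⟨?_, fun x hx => hbound x hx⟩
  have hsub : P.toFinset ⊆ Finset.range (p.1 + 1) ×ˢ Finset.range (q.2 + 1) := by
    intro x hx
    rw [List.mem_toFinset] at hx
    have := hbound x hx
    simp only [Finset.mem_product, Finset.mem_range]
    omega
  have hcard := Finset.card_le_card hsub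
  rw [List.toFinset_card_of_nodup hnodup] at hcard
  simpa [Finset.card_product] using hcard

lemma cons_path (lam : ℕ → ℕ) (p s q : ℕ × ℕ) (hp : inDiagram lam p)
    (hstep : isStep p s) (P' : List (ℕ × ℕ)) (h : IsLatticePath lam s q P') :
    IsLatticePath lam p q (p :: P') := by
  obtain ⟨hne', hh, hl, hmem, hc⟩ := h
  cases P' with
  | nil => exact absurd rfl hne'
  | cons z t' =>
    have hz : z = s := by simpa using hh
    subst hz
    refine ⟨by simp, rfl, by rw [List.getLast?_cons_cons]; exact hl, ?_, ?_⟩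
    · intro r hr
      rcases List.mem_cons.mp hr with rfl | hr'
      · exact hp
      · exact hmem r hr'
    · exact List.isChain_cons_cons.mpr ⟨hstep, hc⟩

lemma paths_eq (lam : ℕ → ℕ) (x y : ℕ) (q : ℕ × ℕ) (hx : 2 ≤ x)
    (hp : inDiagram lam (x, y)) (hne : ((x, y) : ℕ × ℕ) ≠ q) :
    {P | IsLatticePath lam (x, y) q P} =
      (fun P => ((x, y) : ℕ × ℕ) :: P) '' {P | IsLatticePath lam (x - 1, y) q P} ∪
      (fun P => ((x, y) : ℕ × ℕ) :: P) '' {P | IsLatticePath lam (x, y + 1) q P} := by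
  ext P
  constructor
  · rintro ⟨hne', hh, hl, hmem, hc⟩
    cases P with
    | nil => simp at hh
    | cons h t =>
      have hhp : h = (x, y) := by simpa using hh
      subst hhp
      cases t with
      | nil =>
        simp at hl
        exact absurd hl hne
      | cons z t' =>
        have hstep : isStep (x, y) z := (List.isChain_cons_cons.mp hc).1
        rw [List.getLast?_cons_cons] at hl
        have hzpath : IsLatticePath lam z q (z :: t') :=
          ⟨by simp, rfl, hl, fun r hr => hmem r (List.mem_cons_of_mem _ hr),
            (List.isChain_cons_cons.mp hc).2⟩
        obtain ⟨z1, z2⟩ := z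
        rcases hstep with ⟨a1, a2⟩ | ⟨a1, a2⟩
        · left
          refine ⟨(z1, z2) :: t', ?_, rfl⟩
          have a1' : x = z1 + 1 := a1
          have e1 : x - 1 = z1 := by omega
          have e2 : y = z2 := a2
          show IsLatticePath lam (x - 1, y) q ((z1, z2) :: t')
          rw [e1, e2]
          exact hzpath
        · right
          refine ⟨(z1, z2) :: t', ?_, rfl⟩
          have e1 : x = z1 := a1.symm
          have e2 : y + 1 = z2 := a2.symm
          show IsLatticePath lam (x, y + 1) q ((z1, z2) :: t')
          rw [e1, e2]
          exact hzpath
  · rintro (⟨P', hP', rfl⟩ | ⟨P', hP', rfl⟩)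
    · exact cons_path lam (x, y) (x - 1, y) q hp (Or.inl ⟨by omega, rfl⟩) P' hP'
    · exact cons_path lam (x, y) (x, y + 1) q hp (Or.inr ⟨rfl, rfl⟩) P' hP'

end aux

section rec

lemma wt_rec (lam : ℕ → ℕ) (x y : ℕ) (q : ℕ × ℕ) (hx : 2 ≤ x)
    (hp : inDiagram lam (x, y)) (hne : ((x, y) : ℕ × ℕ) ≠ q) :
    wtSum lam (x, y) q =
      wtSum lam (x - 1, y) q + (-1 : ℤ) ^ (x - 1) * wtSum lam (x, y + 1) q := by
  classical
  have hAf : {P | IsLatticePath lam (x - 1, y) q P}.Finite := paths_finite lam _ q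
  have hBf : {P | IsLatticePath lam (x, y + 1) q P}.Finite := paths_finite lam _ q
  have hdisj : Disjoint
      ((fun P => ((x, y) : ℕ × ℕ) :: P) '' {P | IsLatticePath lam (x - 1, y) q P})
      ((fun P => ((x, y) : ℕ × ℕ) :: P) '' {P | IsLatticePath lam (x, y + 1) q P}) := by
    rw [Set.disjoint_left]
    rintro P ⟨P1, hP1, rfl⟩ ⟨P2, hP2, he⟩
    have hPP : P2 = P1 := by injection he
    subst hPP
    have hh1 : P2.head? = some (x - 1, y) := hP1.2.1
    have hh2 : P2.head? = some (x, y + 1) := hP2.2.1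
    rw [hh1] at hh2
    have := Option.some.inj hh2
    simp only [Prod.mk.injEq] at this
    omega
  have hinj : Function.Injective (fun P : List (ℕ × ℕ) => ((x, y) : ℕ × ℕ) :: P) :=
    fun c d h => by injection h
  unfold wtSum
  rw [paths_eq lam x y q hx hp hne]
  rw [finsum_mem_union hdisj (hAf.image _) (hBf.image _)]
  rw [finsum_mem_image hinj.injOn, finsum_mem_image hinj.injOn]
  congr 1
  · apply finsum_mem_congr rfl
    intro P hP
    obtain ⟨hne', hh, -, -, -⟩ := hP
    cases P with
    | nil => exact absurd rfl hne'
    | cons z t =>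
      have hz : z = (x - 1, y) := by simpa using hh
      subst hz
      simp only [pathWeight]
      rw [if_neg (by omega), one_mul]
  · rw [← hBf.coe_toFinset, finsum_mem_coe_finset, finsum_mem_coe_finset, Finset.mul_sum]
    apply Finset.sum_congr rfl
    intro P hP
    rw [Set.Finite.mem_toFinset] at hP
    obtain ⟨hne', hh, -, -, -⟩ := hP
    cases P with
    | nil => exact absurd rfl hne'
    | cons z t =>
      have hz : z = (x, y + 1) := by simpa using hh
      subst hz
      simp only [pathWeight]
      rw [if_pos trivial]

end rec

/-- In a partition `λ`, if `(a,b)` and `(i,j)` are boxes such that `(i-2,j)` and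
`(i,j+2)` are also boxes, `a ≤ i`, `j ≤ b`, `(i-a) + (b-j) ≥ 2`, and both
`wt((i-2,j),(a,b)) = 0` and `wt((i,j+2),(a,b)) = 0`, then `wt((i,j),(a,b)) = 0`. -/
theorem stmt9 (lam : ℕ → ℕ) (hlam : ∀ i j : ℕ, 1 ≤ i → i ≤ j → lam j ≤ lam i)
    (a b i j : ℕ) (hab : inDiagram lam (a, b)) (hij : inDiagram lam (i, j))
    (h1 : inDiagram lam (i - 2, j)) (h2 : inDiagram lam (i, j + 2))
    (hai : a ≤ i) (hjb : j ≤ b) (hdist : 2 ≤ (i - a) + (b - j))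
    (hw1 : wtSum lam (i - 2, j) (a, b) = 0) (hw2 : wtSum lam (i, j + 2) (a, b) = 0) :
    wtSum lam (i, j) (a, b) = 0 := by
  have hi3 : 3 ≤ i := by
    have := h1.1
    simp only at this
    omega
  have hjlam : j ≤ lam i := hij.2.2
  have hj2lam : j + 2 ≤ lam i := h2.2.2
  have hlam1 : lam i ≤ lam (i - 1) := hlam (i - 1) i (by omega) (by omega)
  have hd1 : inDiagram lam (i - 1, j) :=
    ⟨by simp only; omega, hij.2.1, le_trans hjlam hlam1⟩
  have hd2 : inDiagram lam (i, j + 1) := ⟨hij.1, by simp only; omega, by simp only; omega⟩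
  have e1 := wt_rec lam i j (a, b) (by omega) hij
    (by simp only [ne_eq, Prod.mk.injEq, not_and]; omega)
  have e2 := wt_rec lam (i - 1) j (a, b) (by omega) hd1
    (by simp only [ne_eq, Prod.mk.injEq, not_and]; omega)
  have e3 := wt_rec lam i (j + 1) (a, b) (by omega) hd2
    (by simp only [ne_eq, Prod.mk.injEq, not_and]; omega)
  have hee : i - 1 - 1 = i - 2 := by omega
  rw [hee] at e2
  have hpow : (-1 : ℤ) ^ (i - 1) = -(-1 : ℤ) ^ (i - 2) := by
    have h' : i - 1 = (i - 2) + 1 := by omega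
    rw [h', pow_succ]
    ring
  rw [e1, e2, e3, hw1, hw2, hpow]
  ring
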